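/- Let V be an n-dimensional vector space over a field of characteristic zero with basis e_0, ..., e_{n-1}, and let g be the linear automorphism with g(e_i) = e_{i+1} for 0 ≤ i ≤ n-2 and g(e_{n-1}) = β e_0, where β = 1 if n is odd and β = -1 if n is even. Then for a monomial e^j = e_0^{j_0} ⋯ e_{n-1}^{j_{n-1}} in Sym^k(V) with j_0 + ... + j_{n-1} = k, the vector v_j = Σ_{i=0}^{n-1} β^{j_{n-1}+...+j_{n-i}} e^{σ^i(j)} (with σ the cyclic shift σ(j_0,...,j_{n-1}) = (j_{n-1}, j_0, ..., j_{n-2})) is fixed by the induced action of g on Sym^k(V), provided n is odd or k is even. -/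

import Mathlib

/-- Multi-indices: exponent vectors `j : ZMod n → ℕ` of total degree `k`, indexing the
monomial basis `e^j = e₀^{j₀} ⋯ e_{n-1}^{j_{n-1}}` of `Sym^k(V)` for `V` an
`n`-dimensional space with basis `e₀, …, e_{n-1}` (indices taken cyclically). -/
abbrev MultiIdx (n k : ℕ) [NeZero n] := {j : ZMod n → ℕ // ∑ i, j i = k}

/-- The monomial basis vector `e^j` of `Sym^k(V)`, modeling `Sym^k(V)` as the space of
coefficient functions `MultiIdx n k → F`. -/
def symBasis {n k : ℕ} [NeZero n] (F : Type*) [Field F] (j : MultiIdx n k) :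
    MultiIdx n k → F :=
  fun m => if m = j then 1 else 0

/-- The cyclic shift `σ(j₀, …, j_{n-1}) = (j_{n-1}, j₀, …, j_{n-2})` on multi-indices. -/
def cycShift {n k : ℕ} [NeZero n] (j : MultiIdx n k) : MultiIdx n k :=
  ⟨fun i => j.1 (i - 1),
    (Fintype.sum_equiv (Equiv.subRight (1 : ZMod n)) _ (fun i => j.1 i)
      (fun i => rfl)).trans j.2⟩

/-- The induced action of `g` on `Sym^k(V)`, where `g e_i = e_{i+1}` for `i ≤ n-2` and
`g e_{n-1} = β e₀`; on monomials `g (e^j) = β^{j_{n-1}} e^{σ(j)}`, hence on coefficient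
functions `(g v) m = β^{m₀} v (σ⁻¹ m)`. -/
def symGAct {n k : ℕ} [NeZero n] {F : Type*} [Field F] (β : F)
    (v : MultiIdx n k → F) : MultiIdx n k → F :=
  fun m => β ^ (m.1 0) * v ⟨fun i => m.1 (i + 1),
    (Fintype.sum_equiv (Equiv.addRight (1 : ZMod n)) _ (fun i => m.1 i)
      (fun i => rfl)).trans m.2⟩

/-- The vector `v_j = ∑_{i=0}^{n-1} β^{j_{n-1} + ⋯ + j_{n-i}} e^{σ^i(j)}` in
`Sym^k(V)`. -/
def symVj {n k : ℕ} [NeZero n] (F : Type*) [Field F] (β : F) (j : MultiIdx n k) :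
    MultiIdx n k → F :=
  ∑ i ∈ Finset.range n,
    β ^ (∑ t ∈ Finset.range i, j.1 (-(t : ZMod n) - 1)) • symBasis F (cycShift^[i] j)

lemma cycShift_iter_apply {n k : ℕ} [NeZero n] (j : MultiIdx n k) (i : ℕ) (x : ZMod n) :
    (cycShift^[i] j).1 x = j.1 (x - i) := by
  induction i generalizing x with
  | zero => simp
  | succ i ih =>
    rw [Function.iterate_succ_apply']
    show (cycShift^[i] j).1 (x - 1) = _
    rw [ih]
    congr 1
    push_cast
    ring

lemma symGAct_basis {n k : ℕ} [NeZero n] {F : Type*} [Field F] (β : F) (j : MultiIdx n k) :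
    symGAct β (symBasis F j) = β ^ (j.1 (-1)) • symBasis F (cycShift j) := by
  funext m
  simp only [symGAct, symBasis, Pi.smul_apply, smul_eq_mul]
  by_cases hm : m = cycShift j
  · have h1 : (fun i => m.1 (i + 1)) = j.1 := by
      funext i
      rw [hm]
      show j.1 (i + 1 - 1) = j.1 i
      ring_nf
    rw [if_pos (Subtype.ext h1), if_pos hm]
    have h0 : m.1 0 = j.1 (-1) := by
      rw [hm]
      show j.1 (0 - 1) = j.1 (-1)
      norm_num
    rw [h0]
  · have h1 : ¬ ((⟨fun i => m.1 (i + 1),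
        (Fintype.sum_equiv (Equiv.addRight (1 : ZMod n)) _ (fun i => m.1 i)
          (fun i => rfl)).trans m.2⟩ : MultiIdx n k) = j) := by
      intro hc
      apply hm
      apply Subtype.ext
      funext i
      show m.1 i = j.1 (i - 1)
      have h2 := congrFun (congrArg Subtype.val hc) (i - 1)
      simp only at h2
      rw [← h2]
      congr 1
      ring
    rw [if_neg h1, if_neg hm]
    ring

lemma symGAct_smul {n k : ℕ} [NeZero n] {F : Type*} [Field F] (β c : F)
    (v : MultiIdx n k → F) : symGAct β (c • v) = c • symGAct β v := by
  funext m
  simp only [symGAct, Pi.smul_apply, smul_eq_mul]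
  ring

lemma symGAct_sum {n k : ℕ} [NeZero n] {F : Type*} [Field F] (β : F)
    {ι : Type*} (s : Finset ι) (v : ι → MultiIdx n k → F) :
    symGAct β (∑ i ∈ s, v i) = ∑ i ∈ s, symGAct β (v i) := by
  funext m
  simp [symGAct, Finset.mul_sum]

lemma sum_range_zmod {n : ℕ} [NeZero n] (g : ZMod n → ℕ) :
    ∑ t ∈ Finset.range n, g (t : ZMod n) = ∑ i : ZMod n, g i := by
  refine Finset.sum_nbij' (i := fun t => (t : ZMod n)) (j := fun i => i.val) ?_ ?_ ?_ ?_ ?_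
  · intro t ht; exact Finset.mem_univ _
  · intro i _; exact Finset.mem_range.mpr (ZMod.val_lt i)
  · intro t ht; exact ZMod.val_natCast_of_lt (Finset.mem_range.mp ht)
  · intro i _; exact ZMod.natCast_zmod_val i
  · intro t _; rfl

/-- Let `V` be an `n`-dimensional vector space over a field of
characteristic zero with basis `e₀, …, e_{n-1}`, and `g` the automorphism with
`g e_i = e_{i+1}` (`i ≤ n-2`) and `g e_{n-1} = β e₀`, where `β = 1` if `n` is odd and
`β = -1` if `n` is even. If `n` is odd or `k` is even, then for any multi-index `j` of
degree `k`, the vector `v_j` is fixed by the induced action of `g` on `Sym^k(V)`. -/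
theorem symGAct_fixes_vj (n k : ℕ) [NeZero n] (F : Type*) [Field F] [CharZero F]
    (β : F) (hβ : β = if Odd n then 1 else -1) (h : Odd n ∨ Even k)
    (j : MultiIdx n k) :
    symGAct β (symVj F β j) = symVj F β j := by
  set f : ℕ → (MultiIdx n k → F) := fun i =>
    β ^ (∑ t ∈ Finset.range i, j.1 (-(t : ZMod n) - 1)) • symBasis F (cycShift^[i] j)
    with hf
  have hstep : ∀ i, symGAct β (f i) = f (i + 1) := by
    intro i
    rw [hf]
    simp only
    rw [symGAct_smul, symGAct_basis, smul_smul, ← pow_add,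
      Function.iterate_succ_apply', Finset.sum_range_succ, cycShift_iter_apply]
    congr 2
    have harg : ∀ x : ℕ, (-1 - (x : ZMod n)) = (-(x : ZMod n) - 1) := fun x => by ring
    simp only [harg]
  have hβk : β ^ k = 1 := by
    rcases Nat.even_or_odd n with hn | hn
    · have hk : Even k := h.resolve_left (by simp [Nat.not_odd_iff_even.mpr hn])
      rw [hβ, if_neg (Nat.not_odd_iff_even.mpr hn)]
      exact hk.neg_one_pow
    · rw [hβ, if_pos hn, one_pow]
  have hcyc : f n = f 0 := by
    rw [hf]
    simp only [Finset.range_zero, Finset.sum_empty, pow_zero, Function.iterate_zero, id_eq]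
    have hidx : cycShift^[n] j = j := by
      apply Subtype.ext
      funext x
      rw [cycShift_iter_apply]
      congr 1
      simp
    have hexp : (∑ t ∈ Finset.range n, j.1 (-(t : ZMod n) - 1)) = k :=
      calc (∑ t ∈ Finset.range n, j.1 (-(t : ZMod n) - 1))
          = ∑ i : ZMod n, j.1 (-i - 1) := sum_range_zmod (fun i => j.1 (-i - 1))
        _ = ∑ i : ZMod n, j.1 i :=
            Fintype.sum_equiv (Equiv.subLeft (-1 : ZMod n)) _ _
              (fun i => by show j.1 (-i - 1) = j.1 (-1 - i); congr 1; ring)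
        _ = k := j.2
    rw [hidx, hexp, hβk]
  have hv : symVj F β j = ∑ i ∈ Finset.range n, f i := rfl
  rw [hv, symGAct_sum]
  have h1 := Finset.sum_range_succ' f n
  have h2 := Finset.sum_range_succ f n
  have h3 : (∑ i ∈ Finset.range n, f (i + 1)) + f 0
      = (∑ i ∈ Finset.range n, f i) + f n := by rw [← h1, h2]
  rw [hcyc] at h3
  have h4 := add_right_cancel h3
  calc ∑ i ∈ Finset.range n, symGAct β (f i)
      = ∑ i ∈ Finset.range n, f (i + 1) := Finset.sum_congr rfl fun i _ => hstep i
    _ = ∑ i ∈ Finset.range n, f i := h4
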